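/- Let η : closure(B(0,R)) → ℝ be a C² function satisfying −ε²Δη + tη ≤ 0 in B(0,R) and η ≤ 1 on ∂B(0,R), where ε, t, R > 0. Let γ = (−ε + √(ε² + tR²))/(2R²ε). Then η(x) ≤ e^{γ(|x|² − R²)} for all x ∈ B(0,R); in particular η(0) ≤ exp(−(−ε + √(ε² + tR²))/(2ε)) ≤ C e^{−√t R/(4ε)} for some absolute constant C when ε ≤ R. -/

import Mathlib

open Metric

/-- Laplacian of a real function on `ℂ ≅ ℝ²`, via iterated directional derivatives. -/
noncomputable def lapR (η : ℂ → ℝ) (x : ℂ) : ℝ :=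
  fderiv ℝ (fun y => fderiv ℝ η y 1) x 1
    + fderiv ℝ (fun y => fderiv ℝ η y Complex.I) x Complex.I


open Metric Filter Topology Set

/-- Second derivative test at a local max. -/
lemma second_deriv_nonpos_of_isLocalMax {φ : ℝ → ℝ} {c : ℝ}
    (hdiff : ∀ᶠ s in 𝓝 (0:ℝ), DifferentiableAt ℝ φ s)
    (hmax : IsLocalMax φ 0) (hd : HasDerivAt (deriv φ) c 0) : c ≤ 0 := by
  by_contra hc
  push_neg at hc
  have h0 : deriv φ 0 = 0 := hmax.deriv_eq_zero
  have hslope : Tendsto (slope (deriv φ) 0) (𝓝[≠] 0) (𝓝 c) :=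
    hasDerivAt_iff_tendsto_slope.1 hd
  have hpos : ∀ᶠ y in 𝓝[≠] (0:ℝ), 0 < slope (deriv φ) 0 y :=
    hslope.eventually (eventually_gt_nhds hc)
  have hmono : 𝓝[>] (0:ℝ) ≤ 𝓝[≠] (0:ℝ) :=
    nhdsWithin_mono (0:ℝ) (fun y (hy : y ∈ Ioi (0:ℝ)) => ne_of_gt hy)
  have hpos' : ∀ᶠ y in 𝓝[>] (0:ℝ), 0 < deriv φ y := by
    filter_upwards [hpos.filter_mono hmono, self_mem_nhdsWithin] with y hy hy'
    have hs : slope (deriv φ) 0 y = deriv φ y / y := by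
      rw [slope_def_field, h0, sub_zero, sub_zero]
    rw [hs] at hy
    rcases div_pos_iff.1 hy with h | h
    · exact h.1
    · exact absurd h.2 (not_lt.2 (le_of_lt hy'))
  rcases (nhdsGT_basis (0:ℝ)).eventually_iff.1 hpos' with ⟨δ₁, hδ₁, hI₁⟩
  rcases Metric.eventually_nhds_iff.1 hdiff with ⟨δ₂, hδ₂, hI₂⟩
  rcases Metric.eventually_nhds_iff.1 (hmax.filter_mono le_rfl : ∀ᶠ y in 𝓝 (0:ℝ), φ y ≤ φ 0)
    with ⟨δ₃, hδ₃, hI₃⟩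
  set δ : ℝ := min δ₁ (min δ₂ δ₃) / 2 with hδdef
  have hδpos : 0 < δ := by positivity
  have hδlt₁ : δ < δ₁ := lt_of_lt_of_le
    (by linarith [min_le_left δ₁ (min δ₂ δ₃), min_le_right δ₁ (min δ₂ δ₃)]) le_rfl
  have hδlt₂ : δ < δ₂ := by
    have := min_le_left δ₂ δ₃; have := min_le_right δ₁ (min δ₂ δ₃); simp only [hδdef]; linarith
  have hδlt₃ : δ < δ₃ := by
    have := min_le_right δ₂ δ₃; have := min_le_right δ₁ (min δ₂ δ₃); simp only [hδdef]; linarith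
  have hmonoI : StrictMonoOn φ (Icc 0 δ) := by
    apply strictMonoOn_of_deriv_pos (convex_Icc 0 δ)
    · intro y hy
      exact (hI₂ (show dist y 0 < δ₂ by
        rw [Real.dist_eq, sub_zero, abs_of_nonneg hy.1]; linarith [hy.2])).continuousAt.continuousWithinAt
    · intro y hy
      rw [interior_Icc] at hy
      exact hI₁ ⟨hy.1, by linarith [hy.2]⟩
  have h1 : φ 0 < φ δ := hmonoI ⟨le_rfl, hδpos.le⟩ ⟨hδpos.le, le_rfl⟩ hδpos
  have h2 : φ δ ≤ φ 0 := hI₃ (by rw [Real.dist_eq, sub_zero, abs_of_nonneg hδpos.le]; exact hδlt₃)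
  linarith

/-- Directional second derivative test at an interior local max. -/
lemma dir2_nonpos {g : ℂ → ℝ} {x₀ : ℂ} (d : ℂ) (hg : ContDiffAt ℝ 2 g x₀)
    (hmax : IsLocalMax g x₀) :
    fderiv ℝ (fun y => fderiv ℝ g y d) x₀ d ≤ 0 := by
  set A : ℝ → ℂ := fun s => x₀ + s • d with hAdef
  have hA : ∀ s : ℝ, HasDerivAt A d s := by
    intro s
    have h := ((hasDerivAt_id s).smul_const d).const_add x₀
    rwa [one_smul] at h
  have hA0 : A 0 = x₀ := by simp [hAdef]
  have hAt : Tendsto A (𝓝 0) (𝓝 x₀) := by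
    rw [← hA0]; exact (hA 0).continuousAt.tendsto
  have hev : ∀ᶠ y in 𝓝 x₀, ContDiffAt ℝ 2 g y := hg.eventually (by norm_num)
  have hevA : ∀ᶠ s in 𝓝 (0:ℝ), ContDiffAt ℝ 2 g (A s) := hAt.eventually hev
  set φ : ℝ → ℝ := fun s => g (A s) with hφdef
  have hmaxφ : IsLocalMax φ 0 := by
    have := hmax
    rw [← hA0] at this
    exact this.comp_continuous (hA 0).continuousAt
  have hderiv : ∀ᶠ s in 𝓝 (0:ℝ), deriv φ s = fderiv ℝ g (A s) d := by
    filter_upwards [hevA] with s hs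
    exact (((hs.differentiableAt (by norm_num)).hasFDerivAt).comp_hasDerivAt s (hA s)).deriv
  have hdiffφ : ∀ᶠ s in 𝓝 (0:ℝ), DifferentiableAt ℝ φ s := by
    filter_upwards [hevA] with s hs
    exact (((hs.differentiableAt (by norm_num)).hasFDerivAt).comp_hasDerivAt s (hA s)).differentiableAt
  have hfd : DifferentiableAt ℝ (fderiv ℝ g) x₀ :=
    (hg.fderiv_right (m := 1) (by norm_num)).differentiableAt (by norm_num)
  have hF : DifferentiableAt ℝ (fun y => fderiv ℝ g y d) x₀ :=
    (ContinuousLinearMap.apply ℝ ℝ d).differentiableAt.comp x₀ hfd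
  have hψ : HasDerivAt (fun s => fderiv ℝ g (A s) d)
      (fderiv ℝ (fun y => fderiv ℝ g y d) x₀ d) 0 :=
    (hF.hasFDerivAt).comp_hasDerivAt_of_eq 0 (hA 0) hA0.symm
  have hd2 : HasDerivAt (deriv φ) (fderiv ℝ (fun y => fderiv ℝ g y d) x₀ d) 0 :=
    hψ.congr_of_eventuallyEq hderiv
  exact second_deriv_nonpos_of_isLocalMax hdiffφ hmaxφ hd2

noncomputable def wfun (γ c : ℝ) : ℂ → ℝ :=
  fun x => Real.exp (γ * (x.re * x.re + x.im * x.im - c))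

lemma contDiff_wfun (γ c : ℝ) : ContDiff ℝ 2 (wfun γ c) := by
  unfold wfun
  have hre : ContDiff ℝ 2 (fun z : ℂ => z.re) := Complex.reCLM.contDiff
  have him : ContDiff ℝ 2 (fun z : ℂ => z.im) := Complex.imCLM.contDiff
  exact (contDiff_const.mul (((hre.mul hre).add (him.mul him)).sub contDiff_const)).exp

lemma hasFDeriv_w (γ c : ℝ) (y : ℂ) :
    HasFDerivAt (wfun γ c)
      ((wfun γ c y * (2 * γ)) • (y.re • Complex.reCLM + y.im • Complex.imCLM)) y := by
  have hre : HasFDerivAt (fun z : ℂ => z.re) Complex.reCLM y := Complex.reCLM.hasFDerivAt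
  have him : HasFDerivAt (fun z : ℂ => z.im) Complex.imCLM y := Complex.imCLM.hasFDerivAt
  have h := ((((hre.mul hre).add (him.mul him)).sub_const c).const_mul γ).exp
  refine HasFDerivAt.congr_fderiv h ?_
  refine ContinuousLinearMap.ext fun z => ?_
  simp [wfun]
  ring

lemma fderiv_w_one (γ c : ℝ) :
    (fun y : ℂ => fderiv ℝ (wfun γ c) y 1) = fun y => wfun γ c y * ((2 * γ) * y.re) := by
  funext y
  rw [(hasFDeriv_w γ c y).fderiv]
  simp
  ring

lemma fderiv_w_I (γ c : ℝ) :
    (fun y : ℂ => fderiv ℝ (wfun γ c) y Complex.I) = fun y => wfun γ c y * ((2 * γ) * y.im) := by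
  funext y
  rw [(hasFDeriv_w γ c y).fderiv]
  simp
  ring

lemma lapR_w (γ c : ℝ) (x : ℂ) :
    lapR (wfun γ c) x
    = wfun γ c x * (4 * γ + 4 * γ ^ 2 * (x.re * x.re + x.im * x.im)) := by
  have hre : HasFDerivAt (fun z : ℂ => (2 * γ) * z.re) ((2 * γ) • Complex.reCLM) x := by
    simpa using (Complex.reCLM.hasFDerivAt (x := x)).const_mul (2 * γ)
  have him : HasFDerivAt (fun z : ℂ => (2 * γ) * z.im) ((2 * γ) • Complex.imCLM) x := by
    simpa using (Complex.imCLM.hasFDerivAt (x := x)).const_mul (2 * γ)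
  have h1 := ((hasFDeriv_w γ c x).fun_mul hre).fderiv
  have hI := ((hasFDeriv_w γ c x).fun_mul him).fderiv
  unfold lapR
  rw [fderiv_w_one, fderiv_w_I, h1, hI]
  simp
  ring

lemma norm_sq_complex (x : ℂ) : ‖x‖ ^ 2 = x.re * x.re + x.im * x.im := by
  rw [Complex.sq_norm, Complex.normSq_apply]


/-- Comparison principle: if `−ε²Δη + tη ≤ 0` in `B(0,R)` and `η ≤ 1` on `∂B(0,R)`, then
`η(x) ≤ e^{γ(|x|²−R²)}` with `γ = (−ε+√(ε²+tR²))/(2R²ε)`; in particular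
`η(0) ≤ exp(−(−ε+√(ε²+tR²))/(2ε)) ≤ C e^{−√t R/(4ε)}` for an absolute constant `C`
when `ε ≤ R`. -/
theorem comparison_exponential_decay (ε t R : ℝ) (hε : 0 < ε) (ht : 0 < t) (hR : 0 < R)
    (η : ℂ → ℝ) (hreg : ContDiffOn ℝ 2 η (closedBall 0 R))
    (hsub : ∀ x ∈ ball (0 : ℂ) R, -ε ^ 2 * lapR η x + t * η x ≤ 0)
    (hbdry : ∀ x ∈ sphere (0 : ℂ) R, η x ≤ 1) :
    (∀ x ∈ ball (0 : ℂ) R,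
        η x ≤ Real.exp ((-ε + Real.sqrt (ε ^ 2 + t * R ^ 2)) / (2 * R ^ 2 * ε)
          * (‖x‖ ^ 2 - R ^ 2))) ∧
    η 0 ≤ Real.exp (-((-ε + Real.sqrt (ε ^ 2 + t * R ^ 2)) / (2 * ε))) ∧
    (ε ≤ R →
      η 0 ≤ Real.exp (1 / 2) * Real.exp (-(Real.sqrt t * R) / (4 * ε))) := by
  set S : ℝ := Real.sqrt (ε ^ 2 + t * R ^ 2) with hSdef
  have hS2 : S ^ 2 = ε ^ 2 + t * R ^ 2 := Real.sq_sqrt (by positivity)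
  have hεS : ε ≤ S := by
    rw [hSdef]
    have : ε = Real.sqrt (ε ^ 2) := (Real.sqrt_sq hε.le).symm
    rw [this]
    exact Real.sqrt_le_sqrt (by nlinarith)
  set γ : ℝ := (-ε + S) / (2 * R ^ 2 * ε) with hγdef
  have hγ0 : 0 ≤ γ := div_nonneg (by linarith) (by positivity)
  have hγeq : 2 * R ^ 2 * ε * γ = -ε + S := by
    rw [hγdef]; field_simp
  have expand : R ^ 2 * (4 * ε ^ 2 * R ^ 2 * γ ^ 2 + 4 * ε ^ 2 * γ) = R ^ 2 * t := by
    have h := hS2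
    nlinarith [hγeq, hS2]
  have hkey : 4 * ε ^ 2 * R ^ 2 * γ ^ 2 + 4 * ε ^ 2 * γ = t :=
    mul_left_cancel₀ (pow_ne_zero 2 hR.ne') expand
  set w : ℂ → ℝ := wfun γ (R ^ 2) with hwdef
  have hwc2 : ContDiff ℝ 2 w := contDiff_wfun γ (R ^ 2)
  have hwpos : ∀ x, 0 < w x := fun x => Real.exp_pos _
  set v : ℂ → ℝ := fun y => η y - w y with hvdef
  have hvcont : ContinuousOn v (closedBall 0 R) :=
    (hreg.continuousOn).sub ((hwc2.continuous).continuousOn)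
  obtain ⟨x₀, hx₀mem, hmax⟩ :=
    (isCompact_closedBall (0:ℂ) R).exists_isMaxOn
      ⟨0, mem_closedBall_self hR.le⟩ hvcont
  have hx₀le : ‖x₀‖ ≤ R := mem_closedBall_zero_iff.1 hx₀mem
  -- the maximum of v is ≤ 0
  have hvx₀ : v x₀ ≤ 0 := by
    rcases eq_or_lt_of_le hx₀le with heq | hlt
    · -- boundary case
      have hw1 : w x₀ = 1 := by
        have : x₀.re * x₀.re + x₀.im * x₀.im = R ^ 2 := by
          rw [← norm_sq_complex, heq]
        simp [hwdef, wfun, this]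
      have : η x₀ ≤ 1 := hbdry x₀ (mem_sphere_zero_iff_norm.2 heq)
      simp only [hvdef]; linarith [hw1]
    · -- interior case
      have hx₀ball : x₀ ∈ ball (0:ℂ) R := mem_ball_zero_iff.2 hlt
      have hnhds : closedBall (0:ℂ) R ∈ 𝓝 x₀ := closedBall_mem_nhds_of_mem hx₀ball
      have hlocmax : IsLocalMax v x₀ := hmax.isLocalMax hnhds
      have hηx₀ : ContDiffAt ℝ 2 η x₀ := hreg.contDiffAt hnhds
      have hvx : ContDiffAt ℝ 2 v x₀ := hηx₀.sub hwc2.contDiffAt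
      -- split second derivatives
      have hsplit : ∀ d : ℂ,
          fderiv ℝ (fun y => fderiv ℝ v y d) x₀ d
            = fderiv ℝ (fun y => fderiv ℝ η y d) x₀ d
              - fderiv ℝ (fun y => fderiv ℝ w y d) x₀ d := by
        intro d
        have hevη : ∀ᶠ y in 𝓝 x₀, ContDiffAt ℝ 2 η y := hηx₀.eventually (by norm_num)
        have hev : (fun y => fderiv ℝ v y d)
            =ᶠ[𝓝 x₀] fun y => fderiv ℝ η y d - fderiv ℝ w y d := by
          filter_upwards [hevη] with y hy
          rw [hvdef]
          rw [fderiv_fun_sub (hy.differentiableAt (by norm_num))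
            ((hwc2.differentiable (by norm_num)).differentiableAt)]
          simp
        have hFη : DifferentiableAt ℝ (fun y => fderiv ℝ η y d) x₀ :=
          (ContinuousLinearMap.apply ℝ ℝ d).differentiableAt.comp x₀
            ((hηx₀.fderiv_right (m := 1) (by norm_num)).differentiableAt (by norm_num))
        have hFw : DifferentiableAt ℝ (fun y => fderiv ℝ w y d) x₀ :=
          (ContinuousLinearMap.apply ℝ ℝ d).differentiableAt.comp x₀
            ((hwc2.contDiffAt.fderiv_right (m := 1) (by norm_num)).differentiableAt (by norm_num))
        calc fderiv ℝ (fun y => fderiv ℝ v y d) x₀ d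
            = fderiv ℝ (fun y => fderiv ℝ η y d - fderiv ℝ w y d) x₀ d := by
              rw [hev.fderiv_eq]
          _ = _ := by rw [fderiv_fun_sub hFη hFw]; simp
      have hd1 := dir2_nonpos 1 hvx hlocmax
      have hdI := dir2_nonpos Complex.I hvx hlocmax
      rw [hsplit 1] at hd1
      rw [hsplit Complex.I] at hdI
      have hlap : lapR η x₀ ≤ lapR w x₀ := by
        unfold lapR; linarith
      have hηineq := hsub x₀ hx₀ball
      have hwlap : lapR w x₀ = w x₀ * (4 * γ + 4 * γ ^ 2 * (x₀.re * x₀.re + x₀.im * x₀.im)) :=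
        lapR_w γ (R ^ 2) x₀
      have hnormle : x₀.re * x₀.re + x₀.im * x₀.im ≤ R ^ 2 := by
        rw [← norm_sq_complex]
        nlinarith [norm_nonneg x₀]
      have hwpde : ε ^ 2 * lapR w x₀ ≤ t * w x₀ := by
        rw [hwlap]
        have h1 : 4 * γ + 4 * γ ^ 2 * (x₀.re * x₀.re + x₀.im * x₀.im)
            ≤ 4 * γ + 4 * γ ^ 2 * R ^ 2 := by nlinarith [sq_nonneg γ]
        have h2 : ε ^ 2 * (4 * γ + 4 * γ ^ 2 * R ^ 2) = t := by linarith [hkey]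
        have h3 := mul_le_mul_of_nonneg_left h1 (mul_nonneg (sq_nonneg ε) (hwpos x₀).le)
        calc ε ^ 2 * (w x₀ * (4 * γ + 4 * γ ^ 2 * (x₀.re * x₀.re + x₀.im * x₀.im)))
            = ε ^ 2 * w x₀ * (4 * γ + 4 * γ ^ 2 * (x₀.re * x₀.re + x₀.im * x₀.im)) := by ring
          _ ≤ ε ^ 2 * w x₀ * (4 * γ + 4 * γ ^ 2 * R ^ 2) := h3
          _ = w x₀ * (ε ^ 2 * (4 * γ + 4 * γ ^ 2 * R ^ 2)) := by ring
          _ = t * w x₀ := by rw [h2]; ring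
      have hlap2 : ε ^ 2 * lapR η x₀ ≤ ε ^ 2 * lapR w x₀ :=
        mul_le_mul_of_nonneg_left hlap (sq_nonneg ε)
      have htv : t * v x₀ ≤ t * 0 := by
        have : t * η x₀ ≤ ε ^ 2 * lapR η x₀ := by linarith
        simp only [hvdef]
        rw [mul_zero]
        linarith
      exact le_of_mul_le_mul_left (by simpa using htv) ht
  have hball : ∀ y ∈ closedBall (0:ℂ) R, η y ≤ w y := by
    intro y hy
    have := isMaxOn_iff.1 hmax y hy
    simp only [hvdef] at this hvx₀
    linarith
  have main : ∀ x ∈ ball (0 : ℂ) R,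
      η x ≤ Real.exp ((-ε + S) / (2 * R ^ 2 * ε) * (‖x‖ ^ 2 - R ^ 2)) := by
    intro x hx
    have h := hball x (ball_subset_closedBall hx)
    have : w x = Real.exp ((-ε + S) / (2 * R ^ 2 * ε) * (‖x‖ ^ 2 - R ^ 2)) := by
      simp only [hwdef, wfun, norm_sq_complex, hγdef]
    linarith [h, this.symm.le]
  refine ⟨main, ?_, ?_⟩
  · have h0 := main 0 (mem_ball_self hR)
    have hexp : (-ε + S) / (2 * R ^ 2 * ε) * (‖(0:ℂ)‖ ^ 2 - R ^ 2)
        = -((-ε + S) / (2 * ε)) := by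
      rw [norm_zero]
      field_simp
      ring
    rw [hexp] at h0
    exact h0
  · intro _
    have h0 := main 0 (mem_ball_self hR)
    have hexp : (-ε + S) / (2 * R ^ 2 * ε) * (‖(0:ℂ)‖ ^ 2 - R ^ 2)
        = -((-ε + S) / (2 * ε)) := by
      rw [norm_zero]; field_simp; ring
    rw [hexp] at h0
    refine h0.trans ?_
    rw [← Real.exp_add]
    apply Real.exp_le_exp.2
    have hsq : Real.sqrt t * R ≤ S := by
      have h1 : Real.sqrt (t * R ^ 2) ≤ S := Real.sqrt_le_sqrt (by nlinarith)
      have h2 : Real.sqrt (t * R ^ 2) = Real.sqrt t * R := by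
        rw [Real.sqrt_mul ht.le, Real.sqrt_sq hR.le]
      linarith [h2 ▸ h1]
    have hfrac : 1 / 2 + -(Real.sqrt t * R) / (4 * ε) - -((-ε + S) / (2 * ε))
        = (2 * S - Real.sqrt t * R) / (4 * ε) := by
      field_simp
      ring
    have : 0 ≤ (2 * S - Real.sqrt t * R) / (4 * ε) := div_nonneg (by linarith) (by positivity)
    linarith [hfrac ▸ this]
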